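/- Let n be even, N < n−2 odd, and let T be the tree on n vertices consisting of a path 1—2—...—N with n−N additional leaves all attached to vertex N. Let M be its adjacency matrix. Then rank M = N+1, every nonzero eigenvalue of M is simple, and hence M has exactly N+1 simple eigenvalues. -/

import Mathlib

open Matrix Polynomial

lemma charpoly_conj_aux {m : Type*} [Fintype m] [DecidableEq m]
    (P A Q : Matrix m m ℝ) (hPQ : P * Q = 1) (hQP : Q * P = 1) :
    (P * A * Q).charpoly = A.charpoly := by
  have h1 : (C : ℝ →+* ℝ[X]).mapMatrix P * (C : ℝ →+* ℝ[X]).mapMatrix Q = 1 := by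
    rw [← RingHom.map_mul, hPQ, RingHom.map_one]
  have h2 : ((C : ℝ →+* ℝ[X]).mapMatrix Q).det * ((C : ℝ →+* ℝ[X]).mapMatrix P).det = 1 := by
    rw [← det_mul, ← RingHom.map_mul, hQP, RingHom.map_one, det_one]
  have key : charmatrix (P * A * Q) =
      (C : ℝ →+* ℝ[X]).mapMatrix P * charmatrix A * (C : ℝ →+* ℝ[X]).mapMatrix Q := by
    unfold charmatrix
    rw [mul_sub, sub_mul]
    congr 1
    · rw [mul_assoc, scalar_commute (X : ℝ[X]) (Commute.all X) _, ← mul_assoc, h1, one_mul]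
    · rw [RingHom.map_mul, RingHom.map_mul]
  unfold Matrix.charpoly
  rw [key, det_mul, det_mul]
  linear_combination A.charmatrix.det * h2

lemma roots_charpoly_herm {m : Type*} [Fintype m] [DecidableEq m] [LinearOrder m]
    {A : Matrix m m ℝ} (hA : A.IsHermitian) :
    A.charpoly.roots = Multiset.map hA.eigenvalues Finset.univ.val := by
  have hs := hA.spectral_theorem
  have hofReal : (RCLike.ofReal ∘ hA.eigenvalues : m → ℝ) = hA.eigenvalues := by
    funext i; simp [RCLike.ofReal]
  have hU : (hA.eigenvectorUnitary : Matrix m m ℝ) * (star hA.eigenvectorUnitary : Matrix m m ℝ) = 1 := by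
    simpa using (unitary.mul_star_self_of_mem hA.eigenvectorUnitary.2)
  have hU' : (star hA.eigenvectorUnitary : Matrix m m ℝ) * (hA.eigenvectorUnitary : Matrix m m ℝ) = 1 := by
    simpa using (unitary.star_mul_self_of_mem hA.eigenvectorUnitary.2)
  rw [show A.charpoly = (Matrix.diagonal hA.eigenvalues).charpoly by
    conv_lhs => rw [hs, hofReal]
    exact charpoly_conj_aux _ _ _ hU hU']
  rw [charpoly_of_upperTriangular _ (Matrix.blockTriangular_diagonal _)]
  have : ∏ i : m, (X - C (Matrix.diagonal hA.eigenvalues i i)) =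
      (Multiset.map (fun a => X - C a) (Multiset.map hA.eigenvalues Finset.univ.val)).prod := by
    simp only [Matrix.diagonal_apply_eq]
    rw [Finset.prod_eq_multiset_prod, Multiset.map_map]
    rfl
  rw [this, roots_multiset_prod_X_sub_C]

section Rows

variable {n N : ℕ} {M : Matrix (Fin n) (Fin n) ℝ}
    (hM : ∀ i j : Fin n, M i j =
      if (i.val + 1 = j.val ∧ j.val < N) ∨ (j.val + 1 = i.val ∧ i.val < N) ∨
         (i.val = N - 1 ∧ N ≤ j.val) ∨ (j.val = N - 1 ∧ N ≤ i.val)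
      then 1 else 0)

include hM

lemma broom_symm : M.IsHermitian := by
  ext i j
  rw [conjTranspose_apply, hM i j, hM j i, star_trivial]
  congr 1
  exact propext (by tauto)

lemma broom_row_small (v : Fin n → ℝ) (k : ℕ) (hk : k + 1 < N) (hkn : k + 1 < n) :
    M.mulVec v ⟨k, by omega⟩ =
      (if h : 1 ≤ k then v ⟨k - 1, by omega⟩ else 0) + v ⟨k + 1, hkn⟩ := by
  show ∑ j, M ⟨k, by omega⟩ j * v j = _
  by_cases hk0 : 1 ≤ k
  · rw [dif_pos hk0]
    have key : ∀ j : Fin n, M ⟨k, by omega⟩ j * v j =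
        (if j = (⟨k - 1, by omega⟩ : Fin n) then v j else 0) +
        (if j = (⟨k + 1, hkn⟩ : Fin n) then v j else 0) := by
      intro j
      rw [hM]
      rcases eq_or_ne j (⟨k - 1, by omega⟩ : Fin n) with rfl | h1
      · rw [if_pos (by right; left; exact ⟨by simp only [Fin.val_mk]; try omega, by simp only [Fin.val_mk]; try omega⟩), one_mul,
          if_pos rfl, if_neg (by simp only [Fin.ext_iff, Fin.val_mk]; try omega), add_zero]
      · rcases eq_or_ne j (⟨k + 1, hkn⟩ : Fin n) with rfl | h2
        · rw [if_pos (by left; exact ⟨by simp only [Fin.val_mk]; try omega, by simp only [Fin.val_mk]; try omega⟩), one_mul,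
            if_neg (by simp only [Fin.ext_iff, Fin.val_mk]; try omega), if_pos rfl, zero_add]
        · rw [Fin.ne_iff_vne] at h1 h2
          simp only [Fin.val_mk] at h1 h2
          rw [if_neg, zero_mul, if_neg (by simp only [Fin.ext_iff, Fin.val_mk]; try omega),
            if_neg (by simp only [Fin.ext_iff, Fin.val_mk]; try omega), add_zero]
          simp only [Fin.val_mk]
          rintro (⟨a1, a2⟩ | ⟨a1, a2⟩ | ⟨a1, a2⟩ | ⟨a1, a2⟩) <;> omega
    rw [Finset.sum_congr rfl (fun j _ => key j), Finset.sum_add_distrib]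
    simp
  · rw [dif_neg hk0, zero_add]
    have hk0' : k = 0 := by omega
    subst hk0'
    rw [Finset.sum_eq_single (⟨1, hkn⟩ : Fin n)]
    · rw [hM, if_pos (Or.inl ⟨rfl, hk⟩), one_mul]
    · intro j _ hj
      rw [Fin.ne_iff_vne] at hj
      simp only [Fin.val_mk] at hj
      rw [hM, if_neg, zero_mul]
      simp only [Fin.val_mk]
      rintro (⟨a1, a2⟩ | ⟨a1, a2⟩ | ⟨a1, a2⟩ | ⟨a1, a2⟩) <;> omega
    · intro h; exact absurd (Finset.mem_univ _) h

lemma broom_row_leaf (v : Fin n → ℝ) (hN1 : 1 ≤ N) (hNn : N < n) (k : Fin n) (hk : N ≤ k.val) :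
    M.mulVec v k = v ⟨N - 1, by omega⟩ := by
  show ∑ j, M k j * v j = _
  rw [Finset.sum_eq_single (⟨N - 1, by omega⟩ : Fin n)]
  · rw [hM, if_pos, one_mul]
    right; right; right; exact ⟨by simp only [Fin.val_mk], hk⟩
  · intro j _ hj
    rw [Fin.ne_iff_vne] at hj
    simp only [Fin.val_mk] at hj
    rw [hM, if_neg, zero_mul]
    rintro (⟨a1, a2⟩ | ⟨a1, a2⟩ | ⟨a1, a2⟩ | ⟨a1, a2⟩) <;> omega
  · intro h; exact absurd (Finset.mem_univ _) h

end Rows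


section Eig

variable {n N : ℕ} {M : Matrix (Fin n) (Fin n) ℝ}
    (hM : ∀ i j : Fin n, M i j =
      if (i.val + 1 = j.val ∧ j.val < N) ∨ (j.val + 1 = i.val ∧ i.val < N) ∨
         (i.val = N - 1 ∧ N ≤ j.val) ∨ (j.val = N - 1 ∧ N ≤ i.val)
      then 1 else 0)
    (h3 : N + 3 ≤ n) (hN1 : 1 ≤ N)

include hM h3 hN1

lemma broom_eigvec_unique (μ : ℝ) (hμ : μ ≠ 0) (v : Fin n → ℝ)
    (hv : M.mulVec v = μ • v) (h0 : v ⟨0, by omega⟩ = 0) : v = 0 := by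
  set w : ℕ → ℝ := fun i => if h : i < n then v ⟨i, h⟩ else 0 with hwdef
  have hw : ∀ (i : ℕ) (h : i < n), v ⟨i, h⟩ = w i := fun i h => by simp only [hwdef]; rw [dif_pos h]
  have hrow : ∀ k : ℕ, k + 1 < N →
      μ * w k = (if 1 ≤ k then w (k - 1) else 0) + w (k + 1) := by
    intro k hk
    have := congrFun hv ⟨k, by omega⟩
    rw [broom_row_small hM v k hk (by omega), Pi.smul_apply, smul_eq_mul] at this
    rw [← hw k (by omega), ← hw (k + 1) (by omega)]
    split_ifs with h1
    · rw [← hw (k - 1) (by omega)]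
      rw [dif_pos h1] at this
      exact this.symm
    · rw [dif_neg h1] at this
      exact this.symm
  have h0' : w 0 = 0 := by rw [← hw 0 (by omega)]; exact h0
  have hpath : ∀ i : ℕ, i < N → w i = 0 := by
    intro i
    induction i using Nat.strong_induction_on with
    | _ i ih =>
      intro hi
      match i, hi with
      | 0, _ => exact h0'
      | 1, hi =>
        have := hrow 0 (by omega)
        rw [if_neg (by omega), zero_add, h0', mul_zero] at this
        exact this.symm
      | (i+2), hi =>
        have := hrow (i+1) (by omega)
        rw [if_pos (by omega), ih (i+1) (by omega) (by omega), mul_zero,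
          show i + 1 - 1 = i from rfl, ih i (by omega) (by omega), zero_add] at this
        exact this.symm
  funext j
  show v j = 0
  by_cases hj : j.val < N
  · rw [show j = (⟨j.val, j.isLt⟩ : Fin n) from (Fin.eta j j.isLt).symm, hw j.val j.isLt]
    exact hpath j.val hj
  · have := congrFun hv j
    rw [broom_row_leaf hM v hN1 (by omega) j (by omega), hw (N-1) (by omega),
      hpath (N-1) (by omega), Pi.smul_apply, smul_eq_mul] at this
    exact (mul_eq_zero.mp this.symm).resolve_left hμ

lemma broom_ker_char (hN : Odd N) (v : Fin n → ℝ) :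
    M.mulVec v = 0 ↔ ((∀ i : ℕ, (hi : i < N) → v ⟨i, by omega⟩ = 0) ∧
      ∑ j ∈ Finset.univ.filter (fun j : Fin n => N ≤ j.val), v j = 0) := by
  constructor
  · intro hv
    set w : ℕ → ℝ := fun i => if h : i < n then v ⟨i, h⟩ else 0 with hwdef
    have hw : ∀ (i : ℕ) (h : i < n), v ⟨i, h⟩ = w i := fun i h => by simp only [hwdef]; rw [dif_pos h]
    have hrow : ∀ k : ℕ, k + 1 < N →
        0 = (if 1 ≤ k then w (k - 1) else 0) + w (k + 1) := by
      intro k hk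
      have := congrFun hv ⟨k, by omega⟩
      rw [broom_row_small hM v k hk (by omega), Pi.zero_apply] at this
      rw [← hw (k + 1) (by omega)]
      split_ifs with h1
      · rw [← hw (k - 1) (by omega)]
        rw [dif_pos h1] at this
        exact this.symm
      · rw [dif_neg h1] at this
        exact this.symm
    have htop : w (N - 1) = 0 := by
      have := congrFun hv ⟨N, by omega⟩
      rw [broom_row_leaf hM v hN1 (by omega) ⟨N, by omega⟩
        (by simp only [Fin.val_mk]; omega), Pi.zero_apply, hw (N-1) (by omega)] at this
      exact this
    have hodd : ∀ t : ℕ, 2 * t + 1 < N → w (2 * t + 1) = 0 := by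
      intro t
      induction t with
      | zero =>
        intro ht
        have := hrow 0 (by omega)
        rw [if_neg (by omega), zero_add] at this
        exact this.symm
      | succ t ih =>
        intro ht
        have := hrow (2 * t + 2) (by omega)
        rw [if_pos (by omega), show 2 * t + 2 - 1 = 2 * t + 1 from rfl,
          ih (by omega), zero_add] at this
        rw [show 2 * (t + 1) + 1 = 2 * t + 2 + 1 from by omega]
        exact this.symm
    have heven : ∀ t : ℕ, 2 * t ≤ N - 1 → w (N - 1 - 2 * t) = 0 := by
      intro t
      induction t with
      | zero => intro _; simpa using htop
      | succ t ih =>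
        intro ht
        have hk1 : (N - 2 - 2 * t) + 1 < N := by omega
        have := hrow (N - 2 - 2 * t) hk1
        rw [if_pos (by omega), show N - 2 - 2 * t + 1 = N - 1 - 2 * t from by omega,
          ih (by omega), add_zero] at this
        rw [show N - 1 - 2 * (t + 1) = N - 2 - 2 * t - 1 from by omega]
        exact this.symm
    have hpathw : ∀ i : ℕ, i < N → w i = 0 := by
      intro i hi
      have hN2 : N % 2 = 1 := Nat.odd_iff.mp hN
      rcases Nat.even_or_odd i with he | ho
      · have hi2 : i % 2 = 0 := Nat.even_iff.mp he
        have := heven ((N - 1 - i) / 2) (by omega)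
        rwa [show N - 1 - 2 * ((N - 1 - i) / 2) = i from by omega] at this
      · have hi2 : i % 2 = 1 := Nat.odd_iff.mp ho
        have := hodd ((i - 1) / 2) (by omega)
        rwa [show 2 * ((i - 1) / 2) + 1 = i from by omega] at this
    have hpath : ∀ i : ℕ, (hi : i < N) → v ⟨i, by omega⟩ = 0 := by
      intro i hi
      rw [hw i (by omega)]
      exact hpathw i hi
    refine ⟨hpath, ?_⟩
    have := congrFun hv ⟨N - 1, by omega⟩
    rw [Pi.zero_apply] at this
    rw [← this]
    show ∑ j ∈ Finset.univ.filter (fun j : Fin n => N ≤ j.val), v j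
      = ∑ j, M ⟨N - 1, by omega⟩ j * v j
    rw [Finset.sum_filter]
    refine Finset.sum_congr rfl fun j _ => ?_
    by_cases hj : N ≤ j.val
    · have hcond : M (⟨N - 1, by omega⟩ : Fin n) j = 1 := by
        rw [hM]
        exact if_pos (Or.inr (Or.inr (Or.inl ⟨by simp only [Fin.val_mk], hj⟩)))
      rw [if_pos hj, hcond, one_mul]
    · have hvj : v j = 0 := by
        rw [show j = (⟨j.val, j.isLt⟩ : Fin n) from (Fin.eta j j.isLt).symm]
        exact hpath j.val (by omega)
      rw [if_neg hj, hvj, mul_zero]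
  · rintro ⟨hpath, hsum⟩
    funext k
    show ∑ j, M k j * v j = (0 : Fin n → ℝ) k
    rw [Pi.zero_apply]
    have hvlt : ∀ j : Fin n, j.val < N → v j = 0 := by
      intro j hj
      rw [show j = (⟨j.val, j.isLt⟩ : Fin n) from (Fin.eta j j.isLt).symm]
      exact hpath j.val hj
    by_cases hk1 : k.val + 1 < N
    · apply Finset.sum_eq_zero
      intro j _
      by_cases hj : j.val < N
      · rw [hvlt j hj, mul_zero]
      · rw [hM, if_neg, zero_mul]
        rintro (⟨a1, a2⟩ | ⟨a1, a2⟩ | ⟨a1, a2⟩ | ⟨a1, a2⟩) <;> omega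
    · by_cases hk2 : k.val = N - 1
      · have : ∑ j, M k j * v j =
            ∑ j ∈ Finset.univ.filter (fun j : Fin n => N ≤ j.val), v j := by
          rw [Finset.sum_filter]
          refine Finset.sum_congr rfl fun j _ => ?_
          by_cases hj : N ≤ j.val
          · have hcond : M k j = 1 := by
              rw [hM]
              exact if_pos (Or.inr (Or.inr (Or.inl ⟨hk2, hj⟩)))
            rw [if_pos hj, hcond, one_mul]
          · rw [if_neg hj, hvlt j (by omega), mul_zero]
        rw [this, hsum]
      · have hk : N ≤ k.val := by omega
        rw [show ∑ j, M k j * v j = M.mulVec v k from rfl,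
          broom_row_leaf hM v hN1 (by omega) k hk]
        exact hpath (N - 1) (by omega)

end Eig

section Rank

lemma broom_rank {n N : ℕ} {M : Matrix (Fin n) (Fin n) ℝ}
    (hM : ∀ i j : Fin n, M i j =
      if (i.val + 1 = j.val ∧ j.val < N) ∨ (j.val + 1 = i.val ∧ i.val < N) ∨
         (i.val = N - 1 ∧ N ≤ j.val) ∨ (j.val = N - 1 ∧ N ≤ i.val)
      then 1 else 0)
    (h3 : N + 3 ≤ n) (hN1 : 1 ≤ N) (hN : Odd N) : M.rank = N + 1 := by
  classical
  have hNle : N ≤ n := by omega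
  set F : (Fin n → ℝ) →ₗ[ℝ] (Fin N → ℝ) × ℝ :=
    LinearMap.prod
      (LinearMap.pi fun i : Fin N => LinearMap.proj (R := ℝ) (φ := fun _ : Fin n => ℝ)
        (Fin.castLE hNle i))
      (∑ j ∈ Finset.univ.filter (fun j : Fin n => N ≤ j.val),
        LinearMap.proj (R := ℝ) (φ := fun _ : Fin n => ℝ) j) with hF
  have hFapp : ∀ v : Fin n → ℝ, F v =
      (fun i : Fin N => v (Fin.castLE hNle i),
        ∑ j ∈ Finset.univ.filter (fun j : Fin n => N ≤ j.val), v j) := by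
    intro v
    rw [hF]
    refine Prod.ext rfl ?_
    simp [LinearMap.sum_apply]
  have hker : LinearMap.ker M.mulVecLin = LinearMap.ker F := by
    ext v
    rw [LinearMap.mem_ker, LinearMap.mem_ker, Matrix.mulVecLin_apply,
      broom_ker_char hM h3 hN1 hN v, hFapp]
    rw [Prod.mk_eq_zero]
    constructor
    · rintro ⟨h1, h2⟩
      refine ⟨?_, h2⟩
      funext i
      exact h1 i.val i.isLt
    · rintro ⟨h1, h2⟩
      refine ⟨?_, h2⟩
      intro i hi
      exact congrFun h1 ⟨i, hi⟩
  have hsurj : Function.Surjective F := by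
    rintro ⟨w, c⟩
    refine ⟨fun j => if h : j.val < N then w ⟨j.val, h⟩ else if j.val = N then c else 0, ?_⟩
    rw [hFapp]
    refine Prod.ext ?_ ?_
    · funext i
      simp only
      rw [dif_pos (by exact i.isLt)]
      exact congrArg w (Fin.ext rfl)
    · simp only
      rw [Finset.sum_eq_single (⟨N, by omega⟩ : Fin n)]
      · rw [dif_neg (by simp only [Fin.val_mk]; omega)]
        rw [if_pos (by simp only [Fin.val_mk])]
      · intro j hj hjne
        rw [Finset.mem_filter] at hj
        have : j.val ≠ N := by
          intro h
          exact hjne (Fin.ext (by simp only [Fin.val_mk]; omega))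
        rw [dif_neg (by omega), if_neg this]
      · intro h
        exfalso
        exact h (Finset.mem_filter.mpr ⟨Finset.mem_univ _, by simp only [Fin.val_mk]; exact le_rfl⟩)
  have h1 := LinearMap.finrank_range_add_finrank_ker M.mulVecLin
  have h2 := LinearMap.finrank_range_add_finrank_ker F
  have hrange : LinearMap.range F = ⊤ := LinearMap.range_eq_top.mpr hsurj
  rw [hrange] at h2
  have hcod : Module.finrank ℝ ((Fin N → ℝ) × ℝ) = N + 1 := by
    simp
  rw [finrank_top, hcod] at h2
  have hdom : Module.finrank ℝ (Fin n → ℝ) = n := by simp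
  rw [hdom] at h1 h2
  have hrankdef : M.rank = Module.finrank ℝ (LinearMap.range M.mulVecLin) := rfl
  rw [hker] at h1
  omega

end Rank

/-- The broom tree `T` on `n` vertices (`n` even, `N < n - 2` odd): a path on
vertices `0, ..., N-1` with the `n - N` remaining vertices attached as leaves to
vertex `N-1`.  Its adjacency matrix `M` has rank `N + 1`, every nonzero eigenvalue
of `M` is simple, and hence `M` has exactly `N + 1` simple eigenvalues. -/
theorem broom_tree_simple_eigenvalues
    (n N : ℕ) (hn : Even n) (hN : Odd N) (hNn : N < n - 2)
    (M : Matrix (Fin n) (Fin n) ℝ)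
    (hM : ∀ i j : Fin n, M i j =
      if (i.val + 1 = j.val ∧ j.val < N) ∨ (j.val + 1 = i.val ∧ i.val < N) ∨
         (i.val = N - 1 ∧ N ≤ j.val) ∨ (j.val = N - 1 ∧ N ≤ i.val)
      then 1 else 0) :
    M.rank = N + 1 ∧
    (∀ μ : ℝ, μ ≠ 0 → M.charpoly.roots.count μ ≤ 1) ∧
    (M.charpoly.roots.toFinset.filter
      (fun μ => M.charpoly.roots.count μ = 1)).card = N + 1 := by
  classical
  have hN1 : 1 ≤ N := hN.pos
  have h3 : N + 3 ≤ n := by omega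
  have hH : M.IsHermitian := broom_symm hM
  set eig := hH.eigenvalues with heig
  have hroots : M.charpoly.roots = Multiset.map eig Finset.univ.val :=
    roots_charpoly_herm hH
  have hcount : ∀ μ : ℝ, M.charpoly.roots.count μ =
      (Finset.univ.filter (fun i : Fin n => eig i = μ)).card := by
    intro μ
    rw [hroots, Multiset.count_map]
    have : Finset.univ.val.filter (fun a : Fin n => μ = eig a) =
        (Finset.univ.filter (fun i : Fin n => eig i = μ)).val := by
      rw [Finset.filter_val]
      exact Multiset.filter_congr (fun x _ => eq_comm)
    rw [this]
    rfl
  have hrank : M.rank = N + 1 := broom_rank hM h3 hN1 hN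
  -- nonzero eigenvalues are simple
  have hsimple : ∀ μ : ℝ, μ ≠ 0 → M.charpoly.roots.count μ ≤ 1 := by
    intro μ hμ
    rw [hcount]
    by_contra hcon
    push_neg at hcon
    obtain ⟨a, ha, b, hb, hab⟩ := Finset.one_lt_card.mp hcon
    rw [Finset.mem_filter] at ha hb
    have hBa := hH.mulVec_eigenvectorBasis a
    have hBb := hH.mulVec_eigenvectorBasis b
    rw [show hH.eigenvalues a = μ from ha.2] at hBa
    rw [show hH.eigenvalues b = μ from hb.2] at hBb
    set u : Fin n → ℝ := ⇑(hH.eigenvectorBasis a) with hu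
    set y : Fin n → ℝ := ⇑(hH.eigenvectorBasis b) with hy
    have hune : u ⟨0, by omega⟩ ≠ 0 := by
      intro h
      have := broom_eigvec_unique hM h3 hN1 μ hμ u hBa h
      exact hH.eigenvectorBasis.orthonormal.ne_zero a (WithLp.ofLp_injective (p := 2) this)
    set c : ℝ := y ⟨0, by omega⟩ / u ⟨0, by omega⟩ with hc
    set z : Fin n → ℝ := y - c • u with hz
    have hzv : M.mulVec z = μ • z := by
      rw [hz, Matrix.mulVec_sub, Matrix.mulVec_smul, hBa, hBb]
      funext x
      simp only [Pi.sub_apply, Pi.smul_apply, smul_eq_mul]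
      ring
    have hz0 : z ⟨0, by omega⟩ = 0 := by
      rw [hz]
      simp only [Pi.sub_apply, Pi.smul_apply, smul_eq_mul, hc]
      field_simp
      ring
    have hzz : z = 0 := broom_eigvec_unique hM h3 hN1 μ hμ z hzv hz0
    have hyc : y = c • u := by
      rw [hz] at hzz
      exact sub_eq_zero.mp hzz
    have horth : (inner ℝ (hH.eigenvectorBasis a) (hH.eigenvectorBasis b) : ℝ) = 0 :=
      hH.eigenvectorBasis.orthonormal.2 hab
    have hinner : (inner ℝ (hH.eigenvectorBasis a) (hH.eigenvectorBasis b) : ℝ) = c := by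
      have hybc : hH.eigenvectorBasis b = c • hH.eigenvectorBasis a := WithLp.ofLp_injective (p := 2) hyc
      rw [hybc, real_inner_smul_right, real_inner_self_eq_norm_mul_norm,
        hH.eigenvectorBasis.orthonormal.1 a]
      ring
    have hc0 : c = 0 := by rw [← hinner, horth]
    have : hH.eigenvectorBasis b = 0 := by
      have : y = 0 := by rw [hyc, hc0, zero_smul]
      exact WithLp.ofLp_injective (p := 2) this
    exact hH.eigenvectorBasis.orthonormal.ne_zero b this
  refine ⟨hrank, hsimple, ?_⟩
  -- counting
  have hScard : (Finset.univ.filter (fun i : Fin n => eig i ≠ 0)).card = N + 1 := by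
    have := hH.rank_eq_card_non_zero_eigs
    rw [hrank, Fintype.card_subtype] at this
    exact this.symm
  have hzcard : (Finset.univ.filter (fun i : Fin n => eig i = 0)).card = n - (N + 1) := by
    have h4 := Finset.card_filter_add_card_filter_not
      (s := (Finset.univ : Finset (Fin n))) (p := fun i : Fin n => eig i = 0)
    simp only [Finset.card_univ, Fintype.card_fin] at h4
    have : (Finset.univ.filter (fun i : Fin n => ¬eig i = 0)).card = N + 1 := hScard
    omega
  have hcount0 : M.charpoly.roots.count 0 = n - (N + 1) := by
    rw [hcount 0, hzcard]
  have hinj : Set.InjOn eig (Finset.univ.filter (fun i : Fin n => eig i ≠ 0)) := by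
    intro i hi j hj hij
    by_contra hne
    rw [Finset.coe_filter, Set.mem_setOf_eq] at hi hj
    have h2le : 2 ≤ (Finset.univ.filter (fun x : Fin n => eig x = eig i)).card := by
      apply Finset.one_lt_card.mpr
      exact ⟨i, Finset.mem_filter.mpr ⟨Finset.mem_univ _, rfl⟩,
        j, Finset.mem_filter.mpr ⟨Finset.mem_univ _, hij.symm⟩, fun h => hne h⟩
    have := hsimple (eig i) hi.2
    rw [hcount] at this
    omega
  have hT : M.charpoly.roots.toFinset.filter (fun μ => M.charpoly.roots.count μ = 1) =
      (Finset.univ.filter (fun i : Fin n => eig i ≠ 0)).image eig := by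
    ext μ
    rw [Finset.mem_filter, Multiset.mem_toFinset, Finset.mem_image]
    constructor
    · rintro ⟨hmem, hc1⟩
      have hμ0 : μ ≠ 0 := by
        intro h
        rw [h, hcount0] at hc1
        omega
      rw [hcount] at hc1
      obtain ⟨i, hi⟩ := Finset.card_eq_one.mp hc1
      have : i ∈ Finset.univ.filter (fun x : Fin n => eig x = μ) := hi ▸ Finset.mem_singleton_self i
      rw [Finset.mem_filter] at this
      exact ⟨i, Finset.mem_filter.mpr ⟨Finset.mem_univ _, this.2 ▸ hμ0⟩, this.2⟩
    · rintro ⟨i, hi, rfl⟩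
      rw [Finset.mem_filter] at hi
      have h1le : 1 ≤ M.charpoly.roots.count (eig i) := by
        rw [hcount]
        apply Finset.card_pos.mpr
        exact ⟨i, Finset.mem_filter.mpr ⟨Finset.mem_univ _, rfl⟩⟩
      have hle1 := hsimple (eig i) hi.2
      refine ⟨Multiset.count_pos.mp (by omega), by omega⟩
  rw [hT, Finset.card_image_of_injOn hinj, hScard]
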